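/- Let p > 1, δ ≥ 0, and for a ≥ 0 define the shifted function φ_a(t) = ∫₀ᵗ φ'(a+s)·s/(a+s) ds where φ'(t) = (δ+t)^{p-2} t. Then there exist constants c, C > 0 depending only on p such that for all a, t ≥ 0: c·(δ+a+t)^{p-2} t² ≤ φ_a(t) ≤ C·(δ+a+t)^{p-2} t². -/

import Mathlib

open MeasureTheory intervalIntegral Real Set Filter

theorem stmt2 (p δ : ℝ) (hp : 1 < p) (hδ : 0 ≤ δ) :
    ∃ c > (0:ℝ), ∃ C > (0:ℝ), ∀ a ≥ (0:ℝ), ∀ t ≥ (0:ℝ),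
      c * (δ + a + t) ^ (p - 2) * t ^ 2 ≤
        (∫ s in (0:ℝ)..t, ((δ + (a + s)) ^ (p - 2) * (a + s)) * (s / (a + s))) ∧
      (∫ s in (0:ℝ)..t, ((δ + (a + s)) ^ (p - 2) * (a + s)) * (s / (a + s))) ≤
        C * (δ + a + t) ^ (p - 2) * t ^ 2 := by
  have hp0 : (0:ℝ) < p := by linarith
  refine ⟨min (1/2) (1/p), lt_min (by norm_num) (by positivity), max (1/2) (1/p),
    lt_of_lt_of_le (by norm_num : (0:ℝ) < 1/2) (le_max_left _ _), ?_⟩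
  intro a ha t ht
  rcases eq_or_lt_of_le ht with rfl | ht
  · simp
  set b := δ + a with hb
  have hb0 : 0 ≤ b := by positivity
  have hbt : 0 < b + t := by linarith
  set q := p - 2 with hq
  -- rewrite integrand
  have hre : ∀ s : ℝ, (δ + (a + s)) = b + s := fun s => by rw [hb]; ring
  simp only [hre]
  set h : ℝ → ℝ := fun s => ((b + s) ^ q * (a + s)) * (s / (a + s)) with hh
  -- key comparison: s/t*(b+t) ≤ b+s ≤ b+t for s ∈ [0,t]
  have keyA : ∀ s ∈ Icc (0:ℝ) t, s / t * (b + t) ≤ b + s := by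
    intro s hs
    rw [div_mul_eq_mul_div, div_le_iff₀ ht]
    nlinarith [hs.1, hs.2]
  -- h s = (b+s)^q * s for s > 0
  have hval : ∀ s : ℝ, 0 < s → h s = (b + s) ^ q * s := by
    intro s hs
    have : a + s ≠ 0 := by positivity
    simp only [hh]
    rw [mul_assoc, mul_div_assoc', mul_div_cancel_left₀ _ this]
  have hval0 : h 0 = 0 := by simp [hh]
  -- the two comparison functions
  set u1 : ℝ → ℝ := fun s => (b + t) ^ q * s with hu1
  set u2 : ℝ → ℝ := fun s => (b + t) ^ q / t ^ q * s ^ (p - 1) with hu2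
  have htq : 0 < t ^ q := rpow_pos_of_pos ht q
  have hbtq : 0 < (b + t) ^ q := rpow_pos_of_pos hbt q
  have hu1int : IntervalIntegrable u1 volume 0 t :=
    (continuous_const.mul continuous_id).intervalIntegrable 0 t
  have hcont2 : Continuous fun s : ℝ => s ^ (p - 1) := by
    rw [continuous_iff_continuousAt]
    intro x
    exact Real.continuousAt_rpow_const x _ (Or.inr (by linarith))
  have hu2int : IntervalIntegrable u2 volume 0 t :=
    (continuous_const.mul hcont2).intervalIntegrable 0 t
  -- integrals of comparison functions
  have hI1 : ∫ s in (0:ℝ)..t, u1 s = (b + t) ^ q * t ^ 2 / 2 := by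
    rw [hu1, intervalIntegral.integral_const_mul, integral_id]
    ring
  have hI2 : ∫ s in (0:ℝ)..t, u2 s = (b + t) ^ q * t ^ 2 / p := by
    rw [hu2, intervalIntegral.integral_const_mul,
      integral_rpow (Or.inl (by linarith : (-1:ℝ) < p - 1))]
    have h1 : p - 1 + 1 = p := by ring
    rw [h1, Real.zero_rpow (by linarith : p ≠ 0)]
    have ht2 : t ^ p = t ^ q * t ^ 2 := by
      rw [← Real.rpow_natCast t 2, ← Real.rpow_add ht]
      norm_num [hq]
    rw [ht2]
    field_simp
    ring
  -- pointwise value of u2 at s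
  have hu2val : ∀ s ∈ Icc (0:ℝ) t, u2 s = (s / t * (b + t)) ^ q * s := by
    intro s hs
    rcases eq_or_lt_of_le hs.1 with rfl | hs0
    · simp [hu2, Real.zero_rpow (by linarith : p - 1 ≠ 0)]
    · simp only [hu2]
      rw [Real.mul_rpow (by positivity) hbt.le, Real.div_rpow hs0.le ht.le]
      have : s ^ (p - 1) = s ^ q * s := by
        rw [show p - 1 = q + 1 by rw [hq]; ring, Real.rpow_add_one (ne_of_gt hs0)]
      rw [this]; ring
  -- case split on q sign
  have habs : ∀ s ∈ Set.uIoc (0:ℝ) t, 0 ≤ h s := by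
    intro s hs
    rw [Set.uIoc_of_le ht.le] at hs
    rw [hval s hs.1]
    exact mul_nonneg (Real.rpow_nonneg (by linarith [hs.1]) q) hs.1.le
  rcases le_or_gt 0 q with hq0 | hq0
  · -- p ≥ 2 : u2 ≤ h ≤ u1 on [0,t]
    have hle1 : ∀ s ∈ Icc (0:ℝ) t, h s ≤ u1 s := by
      intro s hs
      rcases eq_or_lt_of_le hs.1 with rfl | hs0
      · simp [hval0, hu1]
      · rw [hval s hs0, hu1]
        exact mul_le_mul_of_nonneg_right
          (Real.rpow_le_rpow (by positivity) (by linarith [hs.2]) hq0) hs0.le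
    have hle2 : ∀ s ∈ Icc (0:ℝ) t, u2 s ≤ h s := by
      intro s hs
      rcases eq_or_lt_of_le hs.1 with rfl | hs0
      · rw [hval0, hu2]
        simp [Real.zero_rpow (by linarith : p - 1 ≠ 0)]
      · rw [hval s hs0, hu2val s hs]
        exact mul_le_mul_of_nonneg_right
          (Real.rpow_le_rpow (by positivity) (keyA s hs) hq0) hs0.le
    -- integrability of h
    have hmeas : AEStronglyMeasurable h (volume.restrict (Set.uIoc (0:ℝ) t)) := by
      apply Measurable.aestronglyMeasurable
      fun_prop
    have hint : IntervalIntegrable h volume 0 t := by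
      apply hu1int.mono_fun' hmeas
      filter_upwards [ae_restrict_mem measurableSet_uIoc] with s hs
      rw [Real.norm_eq_abs, abs_of_nonneg (habs s hs)]
      rw [Set.uIoc_of_le ht.le] at hs
      exact hle1 s ⟨hs.1.le, hs.2⟩
    have hlow : (b + t) ^ q * t ^ 2 / p ≤ ∫ s in (0:ℝ)..t, h s := by
      rw [← hI2]
      exact intervalIntegral.integral_mono_on ht.le hu2int hint hle2
    have hup : (∫ s in (0:ℝ)..t, h s) ≤ (b + t) ^ q * t ^ 2 / 2 := by
      rw [← hI1]
      exact intervalIntegral.integral_mono_on ht.le hint hu1int hle1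
    constructor
    · refine le_trans ?_ hlow
      rw [show (b + t) ^ q * t ^ 2 / p = 1/p * (b + t) ^ q * t ^ 2 by ring]
      exact mul_le_mul_of_nonneg_right
        (mul_le_mul_of_nonneg_right (min_le_right _ _) hbtq.le) (sq_nonneg t)
    · refine le_trans hup ?_
      rw [show (b + t) ^ q * t ^ 2 / 2 = 1/2 * (b + t) ^ q * t ^ 2 by ring]
      exact mul_le_mul_of_nonneg_right
        (mul_le_mul_of_nonneg_right (le_max_left _ _) hbtq.le) (sq_nonneg t)
  · -- p < 2 : u1 ≤ h ≤ u2 on [0,t]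
    have hle1 : ∀ s ∈ Icc (0:ℝ) t, u1 s ≤ h s := by
      intro s hs
      rcases eq_or_lt_of_le hs.1 with rfl | hs0
      · simp [hval0, hu1]
      · rw [hval s hs0, hu1]
        refine mul_le_mul_of_nonneg_right ?_ hs0.le
        exact Real.rpow_le_rpow_of_nonpos (by linarith) (by linarith [hs.2]) hq0.le
    have hle2 : ∀ s ∈ Icc (0:ℝ) t, h s ≤ u2 s := by
      intro s hs
      rcases eq_or_lt_of_le hs.1 with rfl | hs0
      · rw [hval0, hu2]
        simp [Real.zero_rpow (by linarith : p - 1 ≠ 0)]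
      · rw [hval s hs0, hu2val s hs]
        refine mul_le_mul_of_nonneg_right ?_ hs0.le
        exact Real.rpow_le_rpow_of_nonpos (by positivity) (keyA s hs) hq0.le
    have hmeas : AEStronglyMeasurable h (volume.restrict (Set.uIoc (0:ℝ) t)) := by
      apply Measurable.aestronglyMeasurable
      fun_prop
    have hint : IntervalIntegrable h volume 0 t := by
      apply hu2int.mono_fun' hmeas
      filter_upwards [ae_restrict_mem measurableSet_uIoc] with s hs
      rw [Real.norm_eq_abs, abs_of_nonneg (habs s hs)]
      rw [Set.uIoc_of_le ht.le] at hs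
      exact hle2 s ⟨hs.1.le, hs.2⟩
    have hlow : (b + t) ^ q * t ^ 2 / 2 ≤ ∫ s in (0:ℝ)..t, h s := by
      rw [← hI1]
      exact intervalIntegral.integral_mono_on ht.le hu1int hint hle1
    have hup : (∫ s in (0:ℝ)..t, h s) ≤ (b + t) ^ q * t ^ 2 / p := by
      rw [← hI2]
      exact intervalIntegral.integral_mono_on ht.le hint hu2int hle2
    constructor
    · refine le_trans ?_ hlow
      rw [show (b + t) ^ q * t ^ 2 / 2 = 1/2 * (b + t) ^ q * t ^ 2 by ring]
      exact mul_le_mul_of_nonneg_right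
        (mul_le_mul_of_nonneg_right (min_le_left _ _) hbtq.le) (sq_nonneg t)
    · refine le_trans hup ?_
      rw [show (b + t) ^ q * t ^ 2 / p = 1/p * (b + t) ^ q * t ^ 2 by ring]
      exact mul_le_mul_of_nonneg_right
        (mul_le_mul_of_nonneg_right (le_max_right _ _) hbtq.le) (sq_nonneg t)
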